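/- Let m ≥ 1 and let U₁, W₁, U₂, W₂ be pairwise disjoint sets, each of size m. Let α : U₁ → W₁, β : W₁ → U₂ and γ : U₂ → W₂ be bijections, and set δ = γ ∘ β ∘ α. Let G be the digraph on vertex set V = U₁ ∪ U₂ ∪ W₁ ∪ W₂ with color classes U = U₁ ∪ U₂ and W = W₁ ∪ W₂, whose edges are exactly: u α(u) for every u ∈ U₁; w β(w) for every w ∈ W₁; u γ(u) for every u ∈ U₂; and u δ(u) for every u ∈ U₁. Then G is a thin proper 2-qBMG. -/
import Mathlib


/-- Two vertices are equivalent (`x ∼̇ y`) if they have the same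
out-neighbors and the same in-neighbors. -/
def dotSim {V : Type*} (E : V → V → Prop) (x y : V) : Prop :=
  (∀ z, E x z ↔ E y z) ∧ (∀ z, E z x ↔ E z y)

/-- `U` and `W` are the color classes of a 2-colored digraph with edge relation `E`:
they partition the vertex set and every edge has one endpoint in each class. -/
def IsTwoColored {V : Type*} (E : V → V → Prop) (U W : Set V) : Prop :=
  (∀ v, v ∈ U ∨ v ∈ W) ∧ (∀ v, ¬(v ∈ U ∧ v ∈ W)) ∧
    ∀ u v, E u v → (u ∈ U ∧ v ∈ W) ∨ (u ∈ W ∧ v ∈ U)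

/-- Axiom (N1). -/
def AxN1 {V : Type*} (E : V → V → Prop) : Prop :=
  ∀ u v, u ≠ v → ¬E u v → ¬E v u → ∀ w t, ¬(E u t ∧ E v w ∧ E t w)

/-- Axiom (N2): bi-transitivity. -/
def AxN2 {V : Type*} (E : V → V → Prop) : Prop :=
  ∀ u v w t, E u v → E v w → E w t → E u t

/-- Axiom (N3). -/
def AxN3 {V : Type*} (E : V → V → Prop) : Prop :=
  ∀ u v w, E u w → E v w → (∀ z, E u z → E v z) ∨ (∀ z, E v z → E u z)

/-- A 2-qBMG: an irreflexive 2-colored digraph satisfying (N1), (N2), (N3). -/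
def IsQBMG {V : Type*} (E : V → V → Prop) (U W : Set V) : Prop :=
  (∀ v, ¬E v v) ∧ IsTwoColored E U W ∧ AxN1 E ∧ AxN2 E ∧ AxN3 E

/-- An automorphism of the digraph: a permutation mapping edges to edges. -/
def IsAut {V : Type*} (E : V → V → Prop) (π : Equiv.Perm V) : Prop :=
  ∀ u v, E u v → E (π u) (π v)

/-- A color-preserving automorphism of the 2-colored digraph. -/
def IsAutI {V : Type*} (E : V → V → Prop) (U W : Set V) (π : Equiv.Perm V) : Prop :=
  IsAut E π ∧ (∀ v ∈ U, π v ∈ U) ∧ (∀ v ∈ W, π v ∈ W)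

/-- The edge relation of Example "ex2310204": on the disjoint union
`U₁ ⊔ W₁ ⊔ U₂ ⊔ W₂`, the edges are exactly `u → α u` (`u ∈ U₁`), `w → β w` (`w ∈ W₁`),
`u → γ u` (`u ∈ U₂`) and `u → δ u = γ (β (α u))` (`u ∈ U₁`). -/
def exEdges {U₁ W₁ U₂ W₂ : Type*} (α : U₁ ≃ W₁) (β : W₁ ≃ U₂) (γ : U₂ ≃ W₂) :
    (U₁ ⊕ W₁ ⊕ U₂ ⊕ W₂) → (U₁ ⊕ W₁ ⊕ U₂ ⊕ W₂) → Prop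
  | Sum.inl u, Sum.inr (Sum.inl w) => w = α u
  | Sum.inr (Sum.inl w), Sum.inr (Sum.inr (Sum.inl u)) => u = β w
  | Sum.inr (Sum.inr (Sum.inl u)), Sum.inr (Sum.inr (Sum.inr w)) => w = γ u
  | Sum.inl u, Sum.inr (Sum.inr (Sum.inr w)) => w = γ (β (α u))
  | _, _ => False

/-- The color class `U = U₁ ∪ U₂` of the example. -/
def exU (U₁ W₁ U₂ W₂ : Type*) : Set (U₁ ⊕ W₁ ⊕ U₂ ⊕ W₂) :=
  {v | match v with
       | Sum.inl _ => True
       | Sum.inr (Sum.inr (Sum.inl _)) => True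
       | _ => False}

/-- The color class `W = W₁ ∪ W₂` of the example. -/
def exW (U₁ W₁ U₂ W₂ : Type*) : Set (U₁ ⊕ W₁ ⊕ U₂ ⊕ W₂) :=
  {v | match v with
       | Sum.inr (Sum.inl _) => True
       | Sum.inr (Sum.inr (Sum.inr _)) => True
       | _ => False}

set_option maxHeartbeats 1000000 in
/-- Let `U₁, W₁, U₂, W₂` be pairwise disjoint sets of size `m ≥ 1`,
let `α : U₁ → W₁`, `β : W₁ → U₂`, `γ : U₂ → W₂` be bijections and `δ = γ ∘ β ∘ α`.
The digraph on `U₁ ∪ U₂ ∪ W₁ ∪ W₂` with color classes `U₁ ∪ U₂` and `W₁ ∪ W₂` and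
edges exactly `u α(u)`, `w β(w)`, `u γ(u)`, `u δ(u)` is a thin proper 2-qBMG. -/
theorem stmt_13 {U₁ W₁ U₂ W₂ : Type*}
    [Fintype U₁] [Fintype W₁] [Fintype U₂] [Fintype W₂]
    [DecidableEq U₁] [DecidableEq W₁] [DecidableEq U₂] [DecidableEq W₂]
    (m : ℕ) (hm : 1 ≤ m)
    (hU₁ : Fintype.card U₁ = m) (hW₁ : Fintype.card W₁ = m)
    (hU₂ : Fintype.card U₂ = m) (hW₂ : Fintype.card W₂ = m)
    (α : U₁ ≃ W₁) (β : W₁ ≃ U₂) (γ : U₂ ≃ W₂) :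
    IsQBMG (exEdges α β γ) (exU U₁ W₁ U₂ W₂) (exW U₁ W₁ U₂ W₂) ∧
    (∀ x y, dotSim (exEdges α β γ) x y → x = y) ∧
    (∃ u v w t, exEdges α β γ u v ∧ exEdges α β γ v w ∧ exEdges α β γ w t) := by
  have hne : Nonempty U₁ := Fintype.card_pos_iff.mp (by omega)
  obtain ⟨u0⟩ := hne
  refine ⟨⟨?_, ⟨?_, ?_, ?_⟩, ?_, ?_, ?_⟩, ?_, ?_⟩
  · -- irreflexive
    intro v
    rcases v with a | a | a | a <;> simp [exEdges]
  · -- two-colored: cover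
    intro v
    rcases v with a | a | a | a <;> simp [exU, exW]
  · -- disjoint
    intro v
    rcases v with a | a | a | a <;> simp [exU, exW]
  · -- edges bichromatic
    intro u v h
    rcases u with a | a | a | a <;> rcases v with b | b | b | b <;>
      simp_all [exEdges, exU, exW]
  · -- N1
    intro u v huv hnu hnv w t ⟨h1, h2, h3⟩
    rcases u with a | a | a | a <;> rcases v with b | b | b | b <;>
      rcases w with c | c | c | c <;> rcases t with d | d | d | d <;>
      simp_all [exEdges]
  · -- N2
    intro u v w t h1 h2 h3
    rcases u with a | a | a | a <;> rcases v with b | b | b | b <;>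
      rcases w with c | c | c | c <;> rcases t with d | d | d | d <;>
      simp_all [exEdges]
  · -- N3
    intro u v w h1 h2
    rcases u with a | a | a | a <;> rcases v with b | b | b | b <;>
      rcases w with c | c | c | c <;> simp_all [exEdges] <;>
      first
        | (left; intro z h; rcases z with d | d | d | d <;> simp_all [exEdges]; done)
        | (right; intro z h; rcases z with d | d | d | d <;> simp_all [exEdges]; done)
  · -- thin
    intro x y h
    obtain ⟨h1, h2⟩ := h
    rcases x with a | a | a | a <;> rcases y with b | b | b | b <;>
      first
        | (have h3 := h1 (Sum.inr (Sum.inl (α a))); simp_all [exEdges]; done)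
        | (have h3 := h1 (Sum.inr (Sum.inr (Sum.inl (β a)))); simp_all [exEdges]; done)
        | (have h3 := h1 (Sum.inr (Sum.inr (Sum.inr (γ a)))); simp_all [exEdges]; done)
        | (have h3 := h1 (Sum.inr (Sum.inl (α b))); simp_all [exEdges]; done)
        | (have h3 := h1 (Sum.inr (Sum.inr (Sum.inl (β b)))); simp_all [exEdges]; done)
        | (have h3 := h1 (Sum.inr (Sum.inr (Sum.inr (γ b)))); simp_all [exEdges]; done)
        | (have h3 := h2 (Sum.inr (Sum.inr (Sum.inl (γ.symm a)))); simp_all [exEdges]; done)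
  · -- proper
    exact ⟨Sum.inl u0, Sum.inr (Sum.inl (α u0)), Sum.inr (Sum.inr (Sum.inl (β (α u0)))),
      Sum.inr (Sum.inr (Sum.inr (γ (β (α u0))))), by simp [exEdges], by simp [exEdges],
      by simp [exEdges]⟩
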